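/- Let G be the group presented by ⟨x, y | [x y⁻¹, x⁻¹ y x], [x y⁻¹, x⁻² y x²]⟩, i.e. the quotient of F₂ by the normal closure of the two relators [x y⁻¹, x⁻¹ y x] and [x y⁻¹, x⁻² y x²] (a presentation of Thompson's group F). Then the commutator subgroup G' of G is perfect: [G', G'] = G'. -/

import Mathlib

open scoped commutatorElement

/-- The two relators of the standard presentation of Thompson's group F:
`[x y⁻¹, x⁻¹ y x]` and `[x y⁻¹, x⁻² y x²]`. -/
def thompsonRels : Set (FreeGroup (Fin 2)) :=
  { ⁅FreeGroup.of (0 : Fin 2) * (FreeGroup.of (1 : Fin 2))⁻¹,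
      (FreeGroup.of (0 : Fin 2))⁻¹ * FreeGroup.of (1 : Fin 2) * FreeGroup.of (0 : Fin 2)⁆,
    ⁅FreeGroup.of (0 : Fin 2) * (FreeGroup.of (1 : Fin 2))⁻¹,
      (FreeGroup.of (0 : Fin 2) ^ 2)⁻¹ * FreeGroup.of (1 : Fin 2) * FreeGroup.of (0 : Fin 2) ^ 2⁆ }


private lemma collect {Q : Type*} [Group Q] (a c p q s t d1 k1 : Q)
    (hp : p = a⁻¹ * c * a) (hs : s = a⁻¹ * p * a) (ht : t = a⁻¹ * q * a)
    (Cd1c : Commute d1 c) (Cd1q : Commute d1 q) (Ck1c : Commute k1 c)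
    (Ck1p : Commute k1 p) (Ck1t : Commute k1 t) (Ccs : Commute c s)
    (e1 : d1 * (c * q⁻¹) * d1⁻¹ * p = 1)
    (e2 : k1 * (c * p * t⁻¹) * k1⁻¹ * (d1 * q⁻¹ * d1⁻¹) * s = 1) : c = 1 := by
  have w1 : d1 * (c * q⁻¹) = (c * q⁻¹) * d1 := (Cd1c.mul_right Cd1q.inv_right).eq
  have E1 : c * q⁻¹ * p = 1 := by
    calc c * q⁻¹ * p = (c * q⁻¹) * d1 * d1⁻¹ * p := by group
      _ = d1 * (c * q⁻¹) * d1⁻¹ * p := by rw [w1]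
      _ = 1 := e1
  have hq : q = p * c := by
    have h := E1
    rw [show (1 : Q) = c * (p * c)⁻¹ * p from by group] at h
    exact inv_injective (mul_left_cancel (mul_right_cancel h))
  have ht' : t = s * p := by rw [ht, hq, hs, hp]; group
  have w2 : k1 * (c * p * t⁻¹) = (c * p * t⁻¹) * k1 :=
    ((Ck1c.mul_right Ck1p).mul_right Ck1t.inv_right).eq
  have wd : d1 * q⁻¹ = q⁻¹ * d1 := Cd1q.inv_right.eq
  have E2 : c * p * t⁻¹ * q⁻¹ * s = 1 := by
    calc c * p * t⁻¹ * q⁻¹ * s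
        = (c * p * t⁻¹) * k1 * k1⁻¹ * (q⁻¹ * d1 * d1⁻¹) * s := by group
      _ = (c * p * t⁻¹) * k1 * k1⁻¹ * (d1 * q⁻¹ * d1⁻¹) * s := by rw [wd]
      _ = k1 * (c * p * t⁻¹) * k1⁻¹ * (d1 * q⁻¹ * d1⁻¹) * s := by rw [w2]
      _ = 1 := e2
  rw [ht', hq] at E2
  have h2 : c * s⁻¹ * c⁻¹ * p⁻¹ * s = 1 := by
    calc c * s⁻¹ * c⁻¹ * p⁻¹ * s = c * p * (s * p)⁻¹ * (p * c)⁻¹ * s := by group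
      _ = 1 := E2
  rw [Ccs.inv_right.eq] at h2
  have h4 : s⁻¹ * p⁻¹ * s = 1 := by
    calc s⁻¹ * p⁻¹ * s = s⁻¹ * c * c⁻¹ * p⁻¹ * s := by group
      _ = 1 := h2
  have hp1 : p = 1 := by
    have : p⁻¹ = 1 := by
      calc p⁻¹ = s * (s⁻¹ * p⁻¹ * s) * s⁻¹ := by group
        _ = s * 1 * s⁻¹ := by rw [h4]
        _ = 1 := by group
    exact inv_injective (by simpa using this)
  calc c = a * p * a⁻¹ := by rw [hp]; group
    _ = a * 1 * a⁻¹ := by rw [hp1]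
    _ = 1 := by group

private lemma metakey {Q : Type*} [Group Q] (a b : Q)
    (hm : ∀ p q r s : Q, ⁅⁅p, q⁆, ⁅r, s⁆⁆ = 1)
    (h1 : ⁅a * b⁻¹, a⁻¹ * b * a⁆ = 1)
    (h2 : ⁅a * b⁻¹, a⁻¹ * a⁻¹ * b * a * a⁆ = 1) : ⁅a, b⁆ = 1 := by
  have key : ∀ g x y h u v X Y : Q, X = g * (x * y * x⁻¹ * y⁻¹) * g⁻¹ →
      Y = h * (u * v * u⁻¹ * v⁻¹) * h⁻¹ → Commute X Y := by
    intro g x y h u v X Y hX hY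
    have eX : X = ⁅g * x * g⁻¹, g * y * g⁻¹⁆ := by
      rw [hX, commutatorElement_def]; group
    have eY : Y = ⁅h * u * h⁻¹, h * v * h⁻¹⁆ := by
      rw [hY, commutatorElement_def]; group
    rw [eX, eY]
    exact commutatorElement_eq_one_iff_commute.mp (hm _ _ _ _)
  rw [commutatorElement_def] at h1 h2 ⊢
  refine collect a (a * b * a⁻¹ * b⁻¹)
      (a⁻¹ * (a * b * a⁻¹ * b⁻¹) * a)
      (b⁻¹ * (a * b * a⁻¹ * b⁻¹) * b)
      (a⁻¹ * (a⁻¹ * (a * b * a⁻¹ * b⁻¹) * a) * a)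
      (a⁻¹ * (b⁻¹ * (a * b * a⁻¹ * b⁻¹) * b) * a)
      (a * b⁻¹ * a⁻¹ * b) (a * b⁻¹ * a⁻¹ * a⁻¹ * b * a)
      rfl rfl rfl
      (key 1 a b⁻¹ 1 a b _ _ (by group <;> simp [pow_two, zpow_two, mul_assoc]) (by group <;> simp [pow_two, zpow_two, mul_assoc]))
      (key 1 a b⁻¹ b⁻¹ a b _ _ (by group <;> simp [pow_two, zpow_two, mul_assoc]) (by group <;> simp [pow_two, zpow_two, mul_assoc]))
      (key a b⁻¹ (a⁻¹ * a⁻¹) 1 a b _ _ (by group <;> simp [pow_two, zpow_two, mul_assoc]) (by group <;> simp [pow_two, zpow_two, mul_assoc]))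
      (key a b⁻¹ (a⁻¹ * a⁻¹) a⁻¹ a b _ _ (by group <;> simp [pow_two, zpow_two, mul_assoc]) (by group <;> simp [pow_two, zpow_two, mul_assoc]))
      (key a b⁻¹ (a⁻¹ * a⁻¹) (a⁻¹ * b⁻¹) a b _ _ (by group <;> simp [pow_two, zpow_two, mul_assoc]) (by group <;> simp [pow_two, zpow_two, mul_assoc]))
      (key 1 a b (a⁻¹ * a⁻¹) a b _ _ (by group <;> simp [pow_two, zpow_two, mul_assoc]) (by group <;> simp [pow_two, zpow_two, mul_assoc]))
      ?_ ?_
  · calc (a * b⁻¹ * a⁻¹ * b) *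
        ((a * b * a⁻¹ * b⁻¹) * (b⁻¹ * (a * b * a⁻¹ * b⁻¹) * b)⁻¹) *
        (a * b⁻¹ * a⁻¹ * b)⁻¹ * (a⁻¹ * (a * b * a⁻¹ * b⁻¹) * a)
        = a * b⁻¹ * (a⁻¹ * b * a) * (a * b⁻¹)⁻¹ * (a⁻¹ * b * a)⁻¹ := by
          group <;> simp [pow_two, zpow_two, mul_assoc]
      _ = 1 := h1
  · calc (a * b⁻¹ * a⁻¹ * a⁻¹ * b * a) *
        ((a * b * a⁻¹ * b⁻¹) * (a⁻¹ * (a * b * a⁻¹ * b⁻¹) * a) *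
          (a⁻¹ * (b⁻¹ * (a * b * a⁻¹ * b⁻¹) * b) * a)⁻¹) *
        (a * b⁻¹ * a⁻¹ * a⁻¹ * b * a)⁻¹ *
        ((a * b⁻¹ * a⁻¹ * b) * (b⁻¹ * (a * b * a⁻¹ * b⁻¹) * b)⁻¹ * (a * b⁻¹ * a⁻¹ * b)⁻¹) *
        (a⁻¹ * (a⁻¹ * (a * b * a⁻¹ * b⁻¹) * a) * a)
        = a * b⁻¹ * (a⁻¹ * a⁻¹ * b * a * a) * (a * b⁻¹)⁻¹ * (a⁻¹ * a⁻¹ * b * a * a)⁻¹ := by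
          group <;> simp [pow_two, zpow_two, mul_assoc]
      _ = 1 := h2

private abbrev G5 := PresentedGroup thompsonRels
private abbrev N5 : Subgroup G5 := ⁅commutator G5, commutator G5⁆
private abbrev Q5 := G5 ⧸ N5
private abbrev π5 : G5 →* Q5 := QuotientGroup.mk' N5
private abbrev ψ5 : FreeGroup (Fin 2) →* Q5 := π5.comp (PresentedGroup.mk thompsonRels)

private lemma map_top5 : Subgroup.map π5 ⊤ = ⊤ :=
  Subgroup.map_top_of_surjective π5 (QuotientGroup.mk'_surjective N5)

private lemma hQbotAux : ⁅commutator Q5, commutator Q5⁆ = (⊥ : Subgroup Q5) := by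
  have hcq : commutator Q5 = Subgroup.map π5 (commutator G5) := by
    show ⁅(⊤ : Subgroup Q5), ⊤⁆ = Subgroup.map π5 ⁅(⊤ : Subgroup G5), ⊤⁆
    rw [Subgroup.map_commutator, map_top5]
  have h2 : ⁅commutator Q5, commutator Q5⁆ = Subgroup.map π5 N5 := by
    rw [hcq, ← Subgroup.map_commutator]
  rw [h2, eq_bot_iff]
  rintro x ⟨y, hy, rfl⟩
  exact Subgroup.mem_bot.mpr ((QuotientGroup.eq_one_iff y).mpr hy)

private lemma hm5 : ∀ p q r s : Q5, ⁅⁅p, q⁆, ⁅r, s⁆⁆ = 1 := by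
  intro p q r s
  have h : ⁅⁅p, q⁆, ⁅r, s⁆⁆ ∈ ⁅commutator Q5, commutator Q5⁆ :=
    Subgroup.commutator_mem_commutator
      (Subgroup.commutator_mem_commutator (Subgroup.mem_top p) (Subgroup.mem_top q))
      (Subgroup.commutator_mem_commutator (Subgroup.mem_top r) (Subgroup.mem_top s))
  rw [hQbotAux] at h
  exact Subgroup.mem_bot.mp h

private lemma hrel5 : ∀ r ∈ thompsonRels, ψ5 r = 1 := by
  intro r hr
  have h : PresentedGroup.mk thompsonRels r = 1 :=
    (QuotientGroup.eq_one_iff r).mpr (Subgroup.subset_normalClosure hr)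
  show π5 (PresentedGroup.mk thompsonRels r) = 1
  rw [h, map_one]

private lemma hAB5 : Commute (ψ5 (FreeGroup.of 0)) (ψ5 (FreeGroup.of 1)) := by
  have h1 := hrel5 _ (Set.mem_insert _ _)
  have h2 := hrel5 _ (Set.mem_insert_of_mem _ rfl)
  simp only [map_commutatorElement, map_mul, map_inv, map_pow] at h1 h2
  have h2' : ⁅ψ5 (FreeGroup.of 0) * (ψ5 (FreeGroup.of 1))⁻¹,
      (ψ5 (FreeGroup.of 0))⁻¹ * (ψ5 (FreeGroup.of 0))⁻¹ * ψ5 (FreeGroup.of 1) *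
        ψ5 (FreeGroup.of 0) * ψ5 (FreeGroup.of 0)⁆ = 1 := by
    rw [show (ψ5 (FreeGroup.of 0))⁻¹ * (ψ5 (FreeGroup.of 0))⁻¹ * ψ5 (FreeGroup.of 1) *
        ψ5 (FreeGroup.of 0) * ψ5 (FreeGroup.of 0)
        = (ψ5 (FreeGroup.of 0) ^ 2)⁻¹ * ψ5 (FreeGroup.of 1) * ψ5 (FreeGroup.of 0) ^ 2 from by
      group <;> simp [pow_two, zpow_two, mul_assoc]]
    exact h2
  exact commutatorElement_eq_one_iff_commute.mp (metakey _ _ hm5 h1 h2')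

private lemma hall5 : ∀ w w' : FreeGroup (Fin 2), Commute (ψ5 w) (ψ5 w') := by
  have hA : ∀ w, Commute (ψ5 (FreeGroup.of 0)) (ψ5 w) := by
    intro w
    induction w using FreeGroup.induction_on with
    | C1 => simpa using Commute.one_right _
    | of i =>
      fin_cases i
      · exact Commute.refl _
      · exact hAB5
    | inv_of x ih => rw [map_inv]; exact ih.inv_right
    | mul x y ihx ihy => rw [map_mul]; exact ihx.mul_right ihy
  have hB : ∀ w, Commute (ψ5 (FreeGroup.of 1)) (ψ5 w) := by
    intro w
    induction w using FreeGroup.induction_on with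
    | C1 => simpa using Commute.one_right _
    | of i =>
      fin_cases i
      · exact hAB5.symm
      · exact Commute.refl _
    | inv_of x ih => rw [map_inv]; exact ih.inv_right
    | mul x y ihx ihy => rw [map_mul]; exact ihx.mul_right ihy
  intro w w'
  induction w using FreeGroup.induction_on with
  | C1 => simpa using Commute.one_left _
  | of i =>
    fin_cases i
    · exact hA w'
    · exact hB w'
  | inv_of x ih => rw [map_inv]; exact ih.inv_left
  | mul x y ihx ihy => rw [map_mul]; exact ihx.mul_left ihy

theorem stmt_5 :
    ⁅commutator (PresentedGroup thompsonRels), commutator (PresentedGroup thompsonRels)⁆ =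
      commutator (PresentedGroup thompsonRels) := by
  refine le_antisymm (Subgroup.commutator_mono le_top le_top) ?_
  rw [commutator_def]
  refine Subgroup.commutator_le.mpr ?_
  intro g _ h _
  obtain ⟨w1, rfl⟩ := PresentedGroup.mk_surjective thompsonRels g
  obtain ⟨w2, rfl⟩ := PresentedGroup.mk_surjective thompsonRels h
  have hone : π5 ⁅PresentedGroup.mk thompsonRels w1, PresentedGroup.mk thompsonRels w2⁆ = 1 := by
    rw [map_commutatorElement]
    exact commutatorElement_eq_one_iff_commute.mpr (hall5 w1 w2)
  exact (QuotientGroup.eq_one_iff _).mp hone
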